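/- Let a ≥ 1 and b ≥ 1 be integers and let G be a finite simple (a,b)-graph, i.e., every subgraph H of G satisfies |E(H)| ≤ a·|V(H)| − b. Then every matching M of G can be partitioned into at most 4a − 2 induced matchings of G. -/

import Mathlib

/-- Two edges of `G` are at distance at most 2: they share a vertex, or some
edge of `G` shares a vertex with each of them. -/
def NearEdges {V : Type*} (G : SimpleGraph V) (e f : Sym2 V) : Prop :=
  (∃ v, v ∈ e ∧ v ∈ f) ∨ ∃ g ∈ G.edgeSet, (∃ v, v ∈ e ∧ v ∈ g) ∧ (∃ v, v ∈ g ∧ v ∈ f)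

/-- `M` is a matching of `G`, viewed as a set of edges:
all edges lie in `G` and are pairwise non-adjacent (share no vertex). -/
def IsMatchingSet {V : Type*} (G : SimpleGraph V) (M : Set (Sym2 V)) : Prop :=
  M ⊆ G.edgeSet ∧ ∀ e ∈ M, ∀ f ∈ M, e ≠ f → ∀ v : V, ¬(v ∈ e ∧ v ∈ f)

/-- `M` is an induced (strong) matching of `G`: a set of edges of `G` any two
distinct members of which are at distance greater than 2 (in particular,
non-adjacent and not joined by any edge of `G`). -/
def IsInducedMatching {V : Type*} (G : SimpleGraph V) (M : Set (Sym2 V)) : Prop :=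
  M ⊆ G.edgeSet ∧ ∀ e ∈ M, ∀ f ∈ M, e ≠ f → ¬ NearEdges G e f

lemma nearEdges_symm {V : Type*} {G : SimpleGraph V} {e f : Sym2 V}
    (h : NearEdges G e f) : NearEdges G f e := by
  rcases h with ⟨v, hv1, hv2⟩ | ⟨g, hg, ⟨u, hu1, hu2⟩, ⟨w, hw1, hw2⟩⟩
  · exact Or.inl ⟨v, hv2, hv1⟩
  · exact Or.inr ⟨g, hg, ⟨w, hw2, hw1⟩, ⟨u, hu2, hu1⟩⟩

/-- The counting lemma: in any nonempty sub-matching `S`, some edge has at most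
`4a - 3` near neighbours within `S`. -/
lemma exists_small_degree {V : Type*} [Fintype V] (G : SimpleGraph V) (a b : ℕ)
    (ha : 1 ≤ a) (hb : 1 ≤ b)
    (hG : ∀ H : G.Subgraph, H.verts.Nonempty →
      (H.edgeSet.ncard : ℤ) ≤ (a : ℤ) * (H.verts.ncard : ℤ) - (b : ℤ))
    (M : Set (Sym2 V)) (hM : IsMatchingSet G M)
    (S : Finset (Sym2 V)) (hS : ↑S ⊆ M) (hne : S.Nonempty) :
    ∃ e ∈ S, {f | f ∈ S ∧ f ≠ e ∧ NearEdges G e f}.ncard ≤ 4 * a - 3 := by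
  classical
  have uniq : ∀ v : V, ∀ e ∈ S, ∀ f ∈ S, v ∈ e → v ∈ f → e = f := by
    intro v e he f hf hv1 hv2
    by_contra hne'
    exact hM.2 e (hS he) f (hS hf) hne' v ⟨hv1, hv2⟩
  set pairs : Finset (Sym2 V × Sym2 V) :=
    (S ×ˢ S).filter (fun p => p.1 ≠ p.2 ∧ NearEdges G p.1 p.2) with hpairs
  have mem_pairs : ∀ p : Sym2 V × Sym2 V,
      p ∈ pairs ↔ p.1 ∈ S ∧ p.2 ∈ S ∧ p.1 ≠ p.2 ∧ NearEdges G p.1 p.2 := by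
    intro p
    simp only [hpairs, Finset.mem_filter, Finset.mem_product]
    tauto
  have key : ∀ p ∈ pairs, ∃ g ∈ G.edgeSet,
      (∃ v, v ∈ p.1 ∧ v ∈ g) ∧ (∃ v, v ∈ g ∧ v ∈ p.2) := by
    intro p hp
    obtain ⟨h1, h2, hne', hnear⟩ := (mem_pairs p).1 hp
    rcases hnear with ⟨v, hv1, hv2⟩ | h
    · exact absurd ⟨hv1, hv2⟩ (hM.2 _ (hS h1) _ (hS h2) hne' v)
    · exact h
  have : Nonempty (Sym2 V) := ⟨hne.choose⟩
  choose! g hg using key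
  -- structure of connecting edges
  have struct : ∀ p ∈ pairs, ∃ u v : V, u ≠ v ∧ g p = s(u, v) ∧ u ∈ p.1 ∧ v ∈ p.2 := by
    intro p hp
    obtain ⟨h1, h2, hne', _⟩ := (mem_pairs p).1 hp
    obtain ⟨_, ⟨u, hu1, hu2⟩, ⟨w, hw1, hw2⟩⟩ := hg p hp
    have huw : u ≠ w := by
      rintro rfl
      exact hM.2 _ (hS h1) _ (hS h2) hne' u ⟨hu1, hw2⟩
    exact ⟨u, w, huw, Sym2.eq_of_ne_mem huw hu2 hw1 (Sym2.mem_mk_left u w)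
      (Sym2.mem_mk_right u w), hu1, hw2⟩
  have notS : ∀ p ∈ pairs, g p ∉ S := by
    intro p hp hgS
    obtain ⟨h1, h2, hne', _⟩ := (mem_pairs p).1 hp
    obtain ⟨u, v, huv, hguv, hu, hv⟩ := struct p hp
    have h1' : p.1 = g p := uniq u _ h1 _ hgS hu (by rw [hguv]; exact Sym2.mem_mk_left u v)
    have h2' : g p = p.2 := uniq v _ hgS _ h2 (by rw [hguv]; exact Sym2.mem_mk_right u v) hv
    exact hne' (h1'.trans h2')
  have fiber : ∀ p ∈ pairs, ∀ q ∈ pairs, g p = g q → p = q ∨ p = q.swap := by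
    intro p hp q hq hgeq
    obtain ⟨hp1, hp2, hpne, _⟩ := (mem_pairs p).1 hp
    obtain ⟨hq1, hq2, hqne, _⟩ := (mem_pairs q).1 hq
    obtain ⟨u, v, huv, hguv, hu, hv⟩ := struct p hp
    obtain ⟨u', v', huv', hguv', hu', hv'⟩ := struct q hq
    have : s(u, v) = s(u', v') := by rw [← hguv, hgeq, hguv']
    rcases Sym2.eq_iff.1 this with ⟨rfl, rfl⟩ | ⟨rfl, rfl⟩
    · left
      have e1 : p.1 = q.1 := uniq u _ hp1 _ hq1 hu hu'
      have e2 : p.2 = q.2 := uniq v _ hp2 _ hq2 hv hv'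
      exact Prod.ext e1 e2
    · right
      have e1 : p.1 = q.2 := uniq u _ hp1 _ hq2 hu hv'
      have e2 : p.2 = q.1 := uniq v _ hp2 _ hq1 hv hu'
      exact Prod.ext e1 e2
  -- the auxiliary subgraph
  set F : Finset (Sym2 V) := S ∪ pairs.image g with hF
  have hFedge : ∀ e ∈ F, e ∈ G.edgeSet := by
    intro e he
    rcases Finset.mem_union.1 he with h | h
    · exact hM.1 (hS h)
    · obtain ⟨p, hp, rfl⟩ := Finset.mem_image.1 h
      exact (hg p hp).1
  have hFvert : ∀ e ∈ F, ∀ v, v ∈ e → ∃ e' ∈ S, v ∈ e' := by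
    intro e he v hv
    rcases Finset.mem_union.1 he with h | h
    · exact ⟨e, h, hv⟩
    · obtain ⟨p, hp, rfl⟩ := Finset.mem_image.1 h
      obtain ⟨hp1, hp2, _, _⟩ := (mem_pairs p).1 hp
      obtain ⟨u, w, huw, hguw, hu, hw⟩ := struct p hp
      rw [hguw] at hv
      rcases Sym2.mem_iff.1 hv with rfl | rfl
      · exact ⟨p.1, hp1, hu⟩
      · exact ⟨p.2, hp2, hw⟩
  let H : G.Subgraph :=
    { verts := {v | ∃ e ∈ S, v ∈ e}
      Adj := fun u v => s(u, v) ∈ F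
      adj_sub := fun h => (G.mem_edgeSet).1 (hFedge _ h)
      edge_vert := fun h => hFvert _ h _ (Sym2.mem_mk_left _ _)
      symm := ⟨fun u v h => by show s(v, u) ∈ F; rw [Sym2.eq_swap]; exact h⟩ }
  have hHedge : H.edgeSet = ↑F := by
    ext e
    induction e using Sym2.ind with
    | _ x y => exact SimpleGraph.Subgraph.mem_edgeSet
  -- vertex count
  set vf : Sym2 V → Finset V := fun e => Finset.univ.filter (· ∈ e) with hvf
  have hvf2 : ∀ e : Sym2 V, (vf e).card ≤ 2 := by
    intro e
    induction e using Sym2.ind with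
    | _ x y =>
      have hsub : vf s(x, y) ⊆ {x, y} := by
        intro v hv
        simp only [hvf, Finset.mem_filter, Sym2.mem_iff] at hv
        simp [hv.2]
      calc (vf s(x,y)).card ≤ ({x, y} : Finset V).card := Finset.card_le_card hsub
        _ ≤ 2 := (Finset.card_insert_le _ _).trans (by simp)
  have hverts : H.verts = ↑(S.biUnion vf) := by
    ext v
    simp [H, hvf, Finset.mem_biUnion]
  have hvcard : H.verts.ncard ≤ 2 * S.card := by
    rw [hverts, Set.ncard_coe_finset]
    calc (S.biUnion vf).card ≤ ∑ e ∈ S, (vf e).card := Finset.card_biUnion_le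
      _ ≤ S.card • 2 := Finset.sum_le_card_nsmul _ _ _ (fun e _ => hvf2 e)
      _ = 2 * S.card := by rw [smul_eq_mul]; ring
  -- edge count
  have hdisj : Disjoint S (pairs.image g) := by
    rw [Finset.disjoint_left]
    intro e heS heI
    obtain ⟨p, hp, rfl⟩ := Finset.mem_image.1 heI
    exact notS p hp heS
  have hecard : H.edgeSet.ncard = S.card + (pairs.image g).card := by
    rw [hHedge, Set.ncard_coe_finset, hF, Finset.card_union_of_disjoint hdisj]
  -- apply hG
  have hvne : H.verts.Nonempty := by
    obtain ⟨e, he⟩ := hne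
    have : ∃ v, v ∈ e := by
      induction e using Sym2.ind with
      | _ x y => exact ⟨x, Sym2.mem_mk_left x y⟩
    obtain ⟨v, hv⟩ := this
    exact ⟨v, e, he, hv⟩
  have hGH := hG H hvne
  -- pairs.card ≤ 2 * image card
  have hpcard : pairs.card ≤ 2 * (pairs.image g).card := by
    apply Finset.card_le_mul_card_image
    intro w hw
    obtain ⟨q, hq, rfl⟩ := Finset.mem_image.1 hw
    have hsub : pairs.filter (fun p => g p = g q) ⊆ {q, q.swap} := by
      intro p hp
      obtain ⟨hp1, hp2⟩ := Finset.mem_filter.1 hp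
      rcases fiber p hp1 q hq hp2 with rfl | h
      · simp
      · simp [h]
    calc (pairs.filter (fun p => g p = g q)).card ≤ ({q, q.swap} : Finset _).card :=
        Finset.card_le_card hsub
      _ ≤ 2 := (Finset.card_insert_le _ _).trans (by simp)
  -- pairs.card = sum of degrees
  have hsum : pairs.card = ∑ e ∈ S, (S.filter (fun f => f ≠ e ∧ NearEdges G e f)).card := by
    rw [Finset.card_eq_sum_card_fiberwise (f := Prod.fst) (t := S)
      (fun p hp => ((mem_pairs p).1 hp).1)]
    apply Finset.sum_congr rfl
    intro e heS
    apply Finset.card_bij (fun p _ => p.2)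
    · intro p hp
      obtain ⟨hp1, hp2⟩ := Finset.mem_filter.1 hp
      obtain ⟨h1, h2, h3, h4⟩ := (mem_pairs p).1 hp1
      subst hp2
      exact Finset.mem_filter.2 ⟨h2, fun h => h3 h.symm, h4⟩
    · intro p hp q hq hpq
      obtain ⟨_, hp2⟩ := Finset.mem_filter.1 hp
      obtain ⟨_, hq2⟩ := Finset.mem_filter.1 hq
      exact Prod.ext (hp2.trans hq2.symm) hpq
    · intro f hf
      obtain ⟨hfS, hfne, hfnear⟩ := Finset.mem_filter.1 hf
      refine ⟨(e, f), Finset.mem_filter.2 ⟨(mem_pairs (e, f)).2 ⟨heS, hfS, fun h => hfne h.symm, hfnear⟩, rfl⟩, rfl⟩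
  -- contradiction argument
  by_contra hcon
  push_neg at hcon
  have hdeg : ∀ e ∈ S, 4 * a - 2 ≤ (S.filter (fun f => f ≠ e ∧ NearEdges G e f)).card := by
    intro e he
    have := hcon e he
    have heq : {f | f ∈ S ∧ f ≠ e ∧ NearEdges G e f}
        = ↑(S.filter (fun f => f ≠ e ∧ NearEdges G e f)) := by
      ext f; simp [Finset.mem_filter]
    rw [heq, Set.ncard_coe_finset] at this
    omega
  have hsum2 : (4 * a - 2) * S.card ≤ pairs.card := by
    rw [hsum, mul_comm]
    have := Finset.card_nsmul_le_sum S
      (fun e => (S.filter (fun f => f ≠ e ∧ NearEdges G e f)).card) (4 * a - 2) hdeg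
    simpa [smul_eq_mul] using this
  -- integer arithmetic
  have h1 : (S.card : ℤ) + ((pairs.image g).card : ℤ) ≤ 2 * a * S.card - b := by
    have := hGH
    rw [hecard] at this
    push_cast at this
    have h2 : (H.verts.ncard : ℤ) ≤ 2 * S.card := by exact_mod_cast hvcard
    nlinarith [this, h2, (by exact_mod_cast ha : (1:ℤ) ≤ a)]
  have h3 : ((4 * a - 2 : ℕ) : ℤ) = 4 * (a : ℤ) - 2 := by
    have : 2 ≤ 4 * a := by omega
    push_cast [Nat.cast_sub this]
    ring
  have h4 : (4 * (a : ℤ) - 2) * S.card ≤ (pairs.card : ℤ) := by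
    rw [← h3]; exact_mod_cast hsum2
  have h5 : (pairs.card : ℤ) ≤ 2 * (pairs.image g).card := by exact_mod_cast hpcard
  have hbz : (1 : ℤ) ≤ b := by exact_mod_cast hb
  linarith

/-- Greedy coloring of the conflict graph using the low-degree edge. -/
lemma greedy_color {V : Type*} [Fintype V] (G : SimpleGraph V) (a b : ℕ)
    (ha : 1 ≤ a) (hb : 1 ≤ b)
    (hG : ∀ H : G.Subgraph, H.verts.Nonempty →
      (H.edgeSet.ncard : ℤ) ≤ (a : ℤ) * (H.verts.ncard : ℤ) - (b : ℤ))
    (M : Set (Sym2 V)) (hM : IsMatchingSet G M) :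
    ∀ n (S : Finset (Sym2 V)), S.card ≤ n → ↑S ⊆ M →
      ∃ c : Sym2 V → Fin (4 * a - 2),
        ∀ e ∈ S, ∀ f ∈ S, e ≠ f → NearEdges G e f → c e ≠ c f := by
  classical
  have hpos : 0 < 4 * a - 2 := by omega
  intro n
  induction n with
  | zero =>
    intro S hcard hS
    have : S = ∅ := Finset.card_eq_zero.1 (Nat.le_zero.1 hcard)
    subst this
    exact ⟨fun _ => ⟨0, hpos⟩, by simp⟩
  | succ n ih =>
    intro S hcard hS
    rcases S.eq_empty_or_nonempty with rfl | hne
    · exact ⟨fun _ => ⟨0, hpos⟩, by simp⟩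
    obtain ⟨e, he, hdeg⟩ := exists_small_degree G a b ha hb hG M hM S hS hne
    set S' := S.erase e with hS'
    have hS'sub : (↑S' : Set (Sym2 V)) ⊆ M := fun x hx =>
      hS (Finset.mem_coe.2 (Finset.mem_of_mem_erase (Finset.mem_coe.1 hx)))
    have hS'card : S'.card ≤ n := by
      have h2 : S'.card = S.card - 1 := by rw [hS']; exact Finset.card_erase_of_mem he
      omega
    obtain ⟨c, hc⟩ := ih S' hS'card hS'sub
    set N : Finset (Sym2 V) := S'.filter (fun f => NearEdges G e f) with hN
    have hNcard : N.card ≤ 4 * a - 3 := by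
      have heq : {f | f ∈ S ∧ f ≠ e ∧ NearEdges G e f} = ↑N := by
        ext f
        simp only [hN, hS', Finset.coe_filter, Finset.mem_erase, Set.mem_setOf_eq]
        tauto
      rw [heq, Set.ncard_coe_finset] at hdeg
      exact hdeg
    have hfree : ∃ k : Fin (4 * a - 2), k ∉ N.image c := by
      by_contra h
      push_neg at h
      have huniv : N.image c = Finset.univ := Finset.eq_univ_iff_forall.2 h
      have h1 : Fintype.card (Fin (4 * a - 2)) ≤ N.card := by
        rw [← Finset.card_univ, ← huniv]
        exact Finset.card_image_le
      rw [Fintype.card_fin] at h1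
      omega
    obtain ⟨k, hk⟩ := hfree
    refine ⟨Function.update c e k, ?_⟩
    intro e1 he1 e2 he2 hne12 hnear
    by_cases h1 : e1 = e <;> by_cases h2 : e2 = e
    · exact absurd (h1.trans h2.symm) hne12
    · subst h1
      rw [Function.update_self, Function.update_of_ne h2]
      intro heq
      apply hk
      rw [heq]
      apply Finset.mem_image_of_mem
      exact Finset.mem_filter.2 ⟨Finset.mem_erase.2 ⟨h2, he2⟩, hnear⟩
    · subst h2
      rw [Function.update_self, Function.update_of_ne h1]
      intro heq
      apply hk
      rw [← heq]
      apply Finset.mem_image_of_mem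
      exact Finset.mem_filter.2 ⟨Finset.mem_erase.2 ⟨h1, he1⟩, nearEdges_symm hnear⟩
    · rw [Function.update_of_ne h1, Function.update_of_ne h2]
      exact hc e1 (Finset.mem_erase.2 ⟨h1, he1⟩) e2 (Finset.mem_erase.2 ⟨h2, he2⟩) hne12 hnear

/-- If `G` is an `(a,b)`-graph with `a ≥ 1`, `b ≥ 1` (every nonempty subgraph
`H` satisfies `|E(H)| ≤ a·|V(H)| − b`), then every matching of `G` can be
partitioned into at most `4a − 2` induced matchings of `G`. -/
theorem stmt_11 {V : Type*} [Fintype V] (G : SimpleGraph V) (a b : ℕ)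
    (ha : 1 ≤ a) (hb : 1 ≤ b)
    (hG : ∀ H : G.Subgraph, H.verts.Nonempty →
      (H.edgeSet.ncard : ℤ) ≤ (a : ℤ) * (H.verts.ncard : ℤ) - (b : ℤ))
    (M : Set (Sym2 V)) (hM : IsMatchingSet G M) :
    ∃ P : Fin (4 * a - 2) → Set (Sym2 V),
      (∀ i, IsInducedMatching G (P i)) ∧
      (∀ i j, i ≠ j → Disjoint (P i) (P j)) ∧
      (⋃ i, P i) = M := by
  classical
  have hfin : M.Finite := Set.toFinite M
  set S := hfin.toFinset with hSdef
  have hScoe : (↑S : Set (Sym2 V)) = M := hfin.coe_toFinset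
  obtain ⟨c, hc⟩ := greedy_color G a b ha hb hG M hM S.card S le_rfl (by rw [hScoe])
  have hmemS : ∀ e, e ∈ M → e ∈ S := fun e he => hfin.mem_toFinset.2 he
  refine ⟨fun i => {e | e ∈ M ∧ c e = i}, ?_, ?_, ?_⟩
  · intro i
    constructor
    · intro e he
      exact hM.1 he.1
    · rintro e ⟨heM, hce⟩ f ⟨hfM, hcf⟩ hnef hnear
      exact hc e (hmemS e heM) f (hmemS f hfM) hnef hnear (hce.trans hcf.symm)
  · intro i j hij
    rw [Set.disjoint_left]
    rintro e ⟨_, hei⟩ ⟨_, hej⟩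
    exact hij (hei ▸ hej ▸ rfl)
  · ext e
    simp only [Set.mem_iUnion, Set.mem_setOf_eq]
    constructor
    · rintro ⟨i, hi, _⟩
      exact hi
    · intro he
      exact ⟨c e, he, rfl⟩
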